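/- arXiv:2109.13069 — 5 statements merged into one kernel-verified Lean document; each statement's English description precedes it below -/
import Mathlib

section
/- (Proposition 2, optimality gap of Cluster Attack.) Suppose a clustered assignment (c', μ') minimizes the cluster distance, i.e. Dist(c', μ') ≤ Dist(c, μ) for every clustered assignment (c, μ) with N clusters, and suppose a clustered assignment (cᵐ, μᵐ) minimizes the total adversarial loss, i.e. Σ_{i∈I} l i (μᵐ(cᵐ(i))) ≤ Σ_{i∈I} l i (μ(c(i))) for every clustered assignment (c, μ) with N clusters. Then Σ_{i∈I} l i (μ'(c'(i))) − Σ_{i∈I} l i (μᵐ(cᵐ(i))) ≤ |M − m| · Dist(c', μ'). -/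
/-- The cluster distance of a clustered assignment `(c, μ)`:
`Dist(c, μ) = Σ_{i ∈ I} ‖x*(i) − μ(c(i))‖²`. -/
noncomputable def clusterDist {I : Type*} [Fintype I] {D N : ℕ}
    (xstar : I → EuclideanSpace ℝ (Fin D))
    (c : I → Fin N) (μ : Fin N → EuclideanSpace ℝ (Fin D)) : ℝ :=
  ∑ i : I, ‖xstar i - μ (c i)‖ ^ 2

/-- Proposition 2 (optimality gap of Cluster Attack): if `(c', μ')` minimizes the
cluster distance and `(cᵐ, μᵐ)` minimizes the total adversarial loss, then the gap
between their adversarial losses is at most `|M − m| · Dist(c', μ')`. -/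
theorem cluster_attack_optimality_gap
    {I : Type*} [Fintype I] [Nonempty I] (D N : ℕ) (hD : 0 < D) (hN : 0 < N)
    (xstar : I → EuclideanSpace ℝ (Fin D))
    (l : I → EuclideanSpace ℝ (Fin D) → ℝ) (m M : I → ℝ)
    (hm0 : ∀ i, 0 ≤ m i) (hmM : ∀ i, m i ≤ M i)
    (hW : ∀ (i : I) (x : EuclideanSpace ℝ (Fin D)),
      m i * ‖x - xstar i‖ ^ 2 ≤ l i x - l i (xstar i) ∧
        l i x - l i (xstar i) ≤ M i * ‖x - xstar i‖ ^ 2)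
    (c' : I → Fin N) (μ' : Fin N → EuclideanSpace ℝ (Fin D))
    (hdist : ∀ (c : I → Fin N) (μ : Fin N → EuclideanSpace ℝ (Fin D)),
      clusterDist xstar c' μ' ≤ clusterDist xstar c μ)
    (cm : I → Fin N) (μm : Fin N → EuclideanSpace ℝ (Fin D))
    (hloss : ∀ (c : I → Fin N) (μ : Fin N → EuclideanSpace ℝ (Fin D)),
      ∑ i : I, l i (μm (cm i)) ≤ ∑ i : I, l i (μ (c i))) :
    ∑ i : I, l i (μ' (c' i)) - ∑ i : I, l i (μm (cm i)) ≤
      |Finset.univ.sup' Finset.univ_nonempty M -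
        Finset.univ.inf' Finset.univ_nonempty m| * clusterDist xstar c' μ' := by
  set Ms := Finset.univ.sup' Finset.univ_nonempty M with hMs
  set ms := Finset.univ.inf' Finset.univ_nonempty m with hms
  have hDist0 : 0 ≤ clusterDist xstar c' μ' :=
    Finset.sum_nonneg fun i _ => sq_nonneg _
  have hms0 : 0 ≤ ms := by
    obtain ⟨i, _, hi⟩ := Finset.exists_mem_eq_inf' Finset.univ_nonempty m
    rw [hms, hi]; exact hm0 i
  have h1 : ∑ i : I, l i (μ' (c' i)) ≤
      ∑ i : I, l i (xstar i) + Ms * clusterDist xstar c' μ' := by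
    rw [clusterDist, Finset.mul_sum, ← Finset.sum_add_distrib]
    apply Finset.sum_le_sum
    intro i _
    have hw := (hW i (μ' (c' i))).2
    have hnorm : ‖μ' (c' i) - xstar i‖ = ‖xstar i - μ' (c' i)‖ := norm_sub_rev _ _
    have hM : M i * ‖μ' (c' i) - xstar i‖ ^ 2 ≤ Ms * ‖xstar i - μ' (c' i)‖ ^ 2 := by
      rw [hnorm]
      exact mul_le_mul_of_nonneg_right (Finset.le_sup' M (Finset.mem_univ i)) (sq_nonneg _)
    linarith
  have h2 : ∑ i : I, l i (xstar i) + ms * clusterDist xstar c' μ' ≤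
      ∑ i : I, l i (μm (cm i)) := by
    have h2a : clusterDist xstar c' μ' ≤ clusterDist xstar cm μm := hdist cm μm
    have h2b : ∑ i : I, l i (xstar i) + ms * clusterDist xstar cm μm ≤
        ∑ i : I, l i (μm (cm i)) := by
      rw [clusterDist, Finset.mul_sum, ← Finset.sum_add_distrib]
      apply Finset.sum_le_sum
      intro i _
      have hw := (hW i (μm (cm i))).1
      have hnorm : ‖μm (cm i) - xstar i‖ = ‖xstar i - μm (cm i)‖ := norm_sub_rev _ _
      have hmi : ms * ‖xstar i - μm (cm i)‖ ^ 2 ≤ m i * ‖μm (cm i) - xstar i‖ ^ 2 := by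
        rw [hnorm]
        exact mul_le_mul_of_nonneg_right (Finset.inf'_le m (Finset.mem_univ i)) (sq_nonneg _)
      linarith
    nlinarith [mul_le_mul_of_nonneg_left h2a hms0]
  have habs : Ms - ms ≤ |Ms - ms| := le_abs_self _
  nlinarith [mul_le_mul_of_nonneg_right habs hDist0]
end

section
/- (Strengthened form of Proposition 2 established by its proof.) Suppose a clustered assignment (c', μ') minimizes the cluster distance, i.e. Dist(c', μ') ≤ Dist(c, μ) for every clustered assignment (c, μ) with N clusters. Then for EVERY clustered assignment (c, μ) with N clusters, Σ_{i∈I} l i (μ'(c'(i))) − Σ_{i∈I} l i (μ(c(i))) ≤ (M − m) · Dist(c', μ'). -/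
/-- Strengthened form of Proposition 2: if `(c', μ')` minimizes the cluster
distance, then for EVERY clustered assignment `(c, μ)` with `N` clusters,
`Σᵢ lᵢ(μ'(c'(i))) − Σᵢ lᵢ(μ(c(i))) ≤ (M − m) · Dist(c', μ')`. -/
theorem cluster_attack_optimality_gap_strong
    {I : Type*} [Fintype I] [Nonempty I] (D N : ℕ) (hD : 0 < D) (hN : 0 < N)
    (xstar : I → EuclideanSpace ℝ (Fin D))
    (l : I → EuclideanSpace ℝ (Fin D) → ℝ) (m M : I → ℝ)
    (hm0 : ∀ i, 0 ≤ m i) (hmM : ∀ i, m i ≤ M i)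
    (hW : ∀ (i : I) (x : EuclideanSpace ℝ (Fin D)),
      m i * ‖x - xstar i‖ ^ 2 ≤ l i x - l i (xstar i) ∧
        l i x - l i (xstar i) ≤ M i * ‖x - xstar i‖ ^ 2)
    (c' : I → Fin N) (μ' : Fin N → EuclideanSpace ℝ (Fin D))
    (hdist : ∀ (c : I → Fin N) (μ : Fin N → EuclideanSpace ℝ (Fin D)),
      clusterDist xstar c' μ' ≤ clusterDist xstar c μ) :
    ∀ (c : I → Fin N) (μ : Fin N → EuclideanSpace ℝ (Fin D)),
      ∑ i : I, l i (μ' (c' i)) - ∑ i : I, l i (μ (c i)) ≤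
        (Finset.univ.sup' Finset.univ_nonempty M -
          Finset.univ.inf' Finset.univ_nonempty m) * clusterDist xstar c' μ' := by
  intro c μ
  set Mx := Finset.univ.sup' Finset.univ_nonempty M with hMx
  set mn := Finset.univ.inf' Finset.univ_nonempty m with hmn
  have hmn0 : 0 ≤ mn := by
    obtain ⟨i, -, hi⟩ := Finset.exists_mem_eq_inf' Finset.univ_nonempty m
    rw [hmn, hi]; exact hm0 i
  have h1 : ∑ i : I, l i (μ' (c' i)) - ∑ i : I, l i (xstar i)
      ≤ Mx * clusterDist xstar c' μ' := by
    rw [← Finset.sum_sub_distrib, clusterDist, Finset.mul_sum]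
    apply Finset.sum_le_sum
    intro i _
    calc l i (μ' (c' i)) - l i (xstar i) ≤ M i * ‖μ' (c' i) - xstar i‖ ^ 2 := (hW i _).2
      _ ≤ Mx * ‖xstar i - μ' (c' i)‖ ^ 2 := by
          rw [norm_sub_rev]
          exact mul_le_mul_of_nonneg_right (Finset.le_sup' M (Finset.mem_univ i))
            (by positivity)
  have h2 : mn * clusterDist xstar c μ ≤ ∑ i : I, l i (μ (c i)) - ∑ i : I, l i (xstar i) := by
    rw [← Finset.sum_sub_distrib, clusterDist, Finset.mul_sum]
    apply Finset.sum_le_sum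
    intro i _
    calc mn * ‖xstar i - μ (c i)‖ ^ 2 ≤ m i * ‖μ (c i) - xstar i‖ ^ 2 := by
          rw [norm_sub_rev]
          exact mul_le_mul_of_nonneg_right (Finset.inf'_le m (Finset.mem_univ i))
            (by positivity)
      _ ≤ _ := (hW i _).1
  have h3 : mn * clusterDist xstar c' μ' ≤ mn * clusterDist xstar c μ :=
    mul_le_mul_of_nonneg_left (hdist c μ) hmn0
  nlinarith [h1, h2, h3]
end

section
/- (Exact-quadratic corollary of Proposition 2.) Suppose m = M. If a clustered assignment (c', μ') minimizes the cluster distance (Dist(c', μ') ≤ Dist(c, μ) for every clustered assignment (c, μ) with N clusters) and a clustered assignment (cᵐ, μᵐ) minimizes the total adversarial loss (Σ_{i∈I} l i (μᵐ(cᵐ(i))) ≤ Σ_{i∈I} l i (μ(c(i))) for every clustered assignment (c, μ) with N clusters), then Σ_{i∈I} l i (μ'(c'(i))) = Σ_{i∈I} l i (μᵐ(cᵐ(i))). -/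
/-- Exact-quadratic corollary of Proposition 2: when `m = M`, a minimizer of the
cluster distance achieves exactly the optimal total adversarial loss. -/
theorem cluster_attack_exact_quadratic
    {I : Type*} [Fintype I] [Nonempty I] (D N : ℕ) (hD : 0 < D) (hN : 0 < N)
    (xstar : I → EuclideanSpace ℝ (Fin D))
    (l : I → EuclideanSpace ℝ (Fin D) → ℝ) (m M : I → ℝ)
    (hm0 : ∀ i, 0 ≤ m i) (hmM : ∀ i, m i ≤ M i)
    (hW : ∀ (i : I) (x : EuclideanSpace ℝ (Fin D)),
      m i * ‖x - xstar i‖ ^ 2 ≤ l i x - l i (xstar i) ∧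
        l i x - l i (xstar i) ≤ M i * ‖x - xstar i‖ ^ 2)
    (hmm : Finset.univ.inf' Finset.univ_nonempty m =
      Finset.univ.sup' Finset.univ_nonempty M)
    (c' : I → Fin N) (μ' : Fin N → EuclideanSpace ℝ (Fin D))
    (hdist : ∀ (c : I → Fin N) (μ : Fin N → EuclideanSpace ℝ (Fin D)),
      clusterDist xstar c' μ' ≤ clusterDist xstar c μ)
    (cm : I → Fin N) (μm : Fin N → EuclideanSpace ℝ (Fin D))
    (hloss : ∀ (c : I → Fin N) (μ : Fin N → EuclideanSpace ℝ (Fin D)),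
      ∑ i : I, l i (μm (cm i)) ≤ ∑ i : I, l i (μ (c i))) :
    ∑ i : I, l i (μ' (c' i)) = ∑ i : I, l i (μm (cm i)) := by

  set k : ℝ := Finset.univ.inf' Finset.univ_nonempty m with hk
  have hmk : ∀ i : I, m i = k ∧ M i = k := by
    intro i
    have h1 : k ≤ m i := Finset.inf'_le _ (Finset.mem_univ i)
    have h2 : M i ≤ k := hmm ▸ Finset.le_sup' _ (Finset.mem_univ i)
    constructor <;> linarith [hmM i]
  have hk0 : 0 ≤ k := (hmk (Classical.arbitrary I)).1 ▸ hm0 _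
  have hl : ∀ (i : I) (x : EuclideanSpace ℝ (Fin D)),
      l i x = l i (xstar i) + k * ‖x - xstar i‖ ^ 2 := by
    intro i x
    obtain ⟨h1, h2⟩ := hW i x
    obtain ⟨e1, e2⟩ := hmk i
    rw [e1] at h1; rw [e2] at h2
    linarith
  have key : ∀ (c : I → Fin N) (μ : Fin N → EuclideanSpace ℝ (Fin D)),
      ∑ i : I, l i (μ (c i)) = (∑ i : I, l i (xstar i)) + k * clusterDist xstar c μ := by
    intro c μ
    rw [clusterDist, Finset.mul_sum, ← Finset.sum_add_distrib]
    refine Finset.sum_congr rfl fun i _ => ?_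
    rw [hl i (μ (c i)), norm_sub_rev]
  have h1 : ∑ i : I, l i (μ' (c' i)) ≤ ∑ i : I, l i (μm (cm i)) := by
    rw [key c' μ', key cm μm]
    have := hdist cm μm
    nlinarith
  exact le_antisymm h1 (hloss c' μ')
end

section
/- (Zero-cluster-distance optimality, a consequence of Proposition 2.) Suppose a clustered assignment (c', μ') minimizes the cluster distance (Dist(c', μ') ≤ Dist(c, μ) for every clustered assignment (c, μ) with N clusters) and Dist(c', μ') = 0. Then for every clustered assignment (c, μ) with N clusters, Σ_{i∈I} l i (μ'(c'(i))) ≤ Σ_{i∈I} l i (μ(c(i))); that is, (c', μ') also minimizes the total adversarial loss. -/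
/-- Zero-cluster-distance optimality: a minimizer of the cluster distance with zero
cluster distance also minimizes the total adversarial loss. -/
theorem zero_cluster_distance_optimality
    {I : Type*} [Fintype I] [Nonempty I] (D N : ℕ) (hD : 0 < D) (hN : 0 < N)
    (xstar : I → EuclideanSpace ℝ (Fin D))
    (l : I → EuclideanSpace ℝ (Fin D) → ℝ) (m M : I → ℝ)
    (hm0 : ∀ i, 0 ≤ m i) (hmM : ∀ i, m i ≤ M i)
    (hW : ∀ (i : I) (x : EuclideanSpace ℝ (Fin D)),
      m i * ‖x - xstar i‖ ^ 2 ≤ l i x - l i (xstar i) ∧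
        l i x - l i (xstar i) ≤ M i * ‖x - xstar i‖ ^ 2)
    (c' : I → Fin N) (μ' : Fin N → EuclideanSpace ℝ (Fin D))
    (hdist : ∀ (c : I → Fin N) (μ : Fin N → EuclideanSpace ℝ (Fin D)),
      clusterDist xstar c' μ' ≤ clusterDist xstar c μ)
    (hzero : clusterDist xstar c' μ' = 0) :
    ∀ (c : I → Fin N) (μ : Fin N → EuclideanSpace ℝ (Fin D)),
      ∑ i : I, l i (μ' (c' i)) ≤ ∑ i : I, l i (μ (c i)) := by
  intro c μ
  have heq : ∀ i : I, μ' (c' i) = xstar i := by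
    intro i
    have hterm : ‖xstar i - μ' (c' i)‖ ^ 2 = 0 := by
      have := Finset.sum_eq_zero_iff_of_nonneg
        (fun j _ => sq_nonneg _ : ∀ j ∈ Finset.univ,
          (0:ℝ) ≤ ‖xstar j - μ' (c' j)‖ ^ 2) |>.mp hzero i (Finset.mem_univ i)
      exact this
    have : xstar i - μ' (c' i) = 0 := by
      have := pow_eq_zero_iff (n := 2) (by norm_num) |>.mp hterm
      exact norm_eq_zero.mp this
    have := sub_eq_zero.mp this
    exact this.symm
  apply Finset.sum_le_sum
  intro i _
  rw [heq i]
  have h1 := (hW i (μ (c i))).1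
  have h2 : (0:ℝ) ≤ m i * ‖μ (c i) - xstar i‖ ^ 2 := mul_nonneg (hm0 i) (sq_nonneg _)
  linarith
end

section
/- (Cluster Attack is exactly optimal when there are at least as many fake nodes as victim nodes.) Suppose N ≥ |I| and a clustered assignment (c', μ') minimizes the cluster distance, i.e. Dist(c', μ') ≤ Dist(c, μ) for every clustered assignment (c, μ) with N clusters. Then for every clustered assignment (c, μ) with N clusters, Σ_{i∈I} l i (μ'(c'(i))) ≤ Σ_{i∈I} l i (μ(c(i))). -/
/-- Cluster Attack is exactly optimal when there are at least as many fake nodes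
as victim nodes: if `N ≥ |I|` and `(c', μ')` minimizes the cluster distance, then
`(c', μ')` also minimizes the total adversarial loss. -/
theorem cluster_attack_optimal_many_fake_nodes
    {I : Type*} [Fintype I] [Nonempty I] (D N : ℕ) (hD : 0 < D) (hN : 0 < N)
    (hNI : Fintype.card I ≤ N)
    (xstar : I → EuclideanSpace ℝ (Fin D))
    (l : I → EuclideanSpace ℝ (Fin D) → ℝ) (m M : I → ℝ)
    (hm0 : ∀ i, 0 ≤ m i) (hmM : ∀ i, m i ≤ M i)
    (hW : ∀ (i : I) (x : EuclideanSpace ℝ (Fin D)),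
      m i * ‖x - xstar i‖ ^ 2 ≤ l i x - l i (xstar i) ∧
        l i x - l i (xstar i) ≤ M i * ‖x - xstar i‖ ^ 2)
    (c' : I → Fin N) (μ' : Fin N → EuclideanSpace ℝ (Fin D))
    (hdist : ∀ (c : I → Fin N) (μ : Fin N → EuclideanSpace ℝ (Fin D)),
      clusterDist xstar c' μ' ≤ clusterDist xstar c μ) :
    ∀ (c : I → Fin N) (μ : Fin N → EuclideanSpace ℝ (Fin D)),
      ∑ i : I, l i (μ' (c' i)) ≤ ∑ i : I, l i (μ (c i)) := by
  intro c μ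
  -- build an assignment with zero cluster distance
  set e := Fintype.equivFin I
  set c₀ : I → Fin N := fun i => Fin.castLE hNI (e i) with hc₀
  set μ₀ : Fin N → EuclideanSpace ℝ (Fin D) := fun j =>
    if h : (j : ℕ) < Fintype.card I then xstar (e.symm ⟨j, h⟩)
    else xstar (Classical.arbitrary I) with hμ₀
  have hzero : clusterDist xstar c₀ μ₀ = 0 := by
    unfold clusterDist
    apply Finset.sum_eq_zero
    intro i _
    have h : μ₀ (c₀ i) = xstar i := by
      simp only [hμ₀, hc₀]
      rw [dif_pos (by simpa using (e i).isLt)]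
      congr 1
      simp
    rw [h]
    simp
  have hle : clusterDist xstar c' μ' ≤ 0 := hzero ▸ hdist c₀ μ₀
  have heq : ∀ i : I, μ' (c' i) = xstar i := by
    intro i
    have hnonneg : ∀ j ∈ Finset.univ, (0:ℝ) ≤ ‖xstar j - μ' (c' j)‖ ^ 2 :=
      fun j _ => sq_nonneg _
    have hsum0 : clusterDist xstar c' μ' = 0 :=
      le_antisymm hle (Finset.sum_nonneg hnonneg)
    have := (Finset.sum_eq_zero_iff_of_nonneg hnonneg).1 hsum0 i (Finset.mem_univ i)
    have hn : ‖xstar i - μ' (c' i)‖ = 0 := by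
      have := pow_eq_zero_iff (n := 2) (by norm_num) |>.1 this
      exact this
    have : xstar i - μ' (c' i) = 0 := norm_eq_zero.1 hn
    linear_combination (norm := module) -this
  calc ∑ i : I, l i (μ' (c' i)) = ∑ i : I, l i (xstar i) := by
        exact Finset.sum_congr rfl fun i _ => by rw [heq i]
    _ ≤ ∑ i : I, l i (μ (c i)) := by
        apply Finset.sum_le_sum
        intro i _
        have h1 := (hW i (μ (c i))).1
        have h2 : (0:ℝ) ≤ m i * ‖μ (c i) - xstar i‖ ^ 2 :=
          mul_nonneg (hm0 i) (sq_nonneg _)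
        linarith
end
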